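/- If p(v,v) is a primitive t-th root of unity and n = t (or n = t·lᵏ when the ground field has characteristic l > 0), then the iterated skew commutators collapse: [u, vⁿ] = [...[[u,v],v],...,v] (n-fold) and [vⁿ, u] = [v,[...[v,u]...]] (n-fold). -/

import Mathlib

open Polynomial Finset

section stmt3aux

variable {k : Type*} [Field k]

theorem stmt3_aux2 {ζ : k} {t : ℕ} (ht : 0 < t) (h : IsPrimitiveRoot ζ t)
    {n : ℕ} (hn : n = t ∨ (ringChar k ≠ 0 ∧ ∃ m : ℕ, n = t * ringChar k ^ m)) :
    ∏ j ∈ Finset.range n, (X - C (ζ ^ j)) = X ^ n - 1 := by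
  have base : ∏ j ∈ Finset.range t, (X - C (ζ ^ j)) = X ^ t - 1 := by
    have hmonic : (X ^ t - C (1 : k)).Monic := monic_X_pow_sub_C (1 : k) ht.ne'
    have hroots : (X ^ t - C (1:k)).roots = nthRoots t (1:k) := by rw [nthRoots]
    have hcard : Multiset.card (X ^ t - C (1:k)).roots = (X ^ t - C (1:k)).natDegree := by
      rw [hroots, h.nthRoots_eq (one_pow t), natDegree_X_pow_sub_C, Multiset.card_map,
        Multiset.card_range]
    have := prod_multiset_X_sub_C_of_monic_of_roots_card_eq hmonic hcard
    rw [hroots, h.nthRoots_eq (one_pow t)] at this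
    calc ∏ j ∈ Finset.range t, (X - C (ζ ^ j))
        = (((Multiset.range t).map (ζ ^ · * 1)).map fun a => X - C a).prod := by
          rw [Multiset.map_map]
          simp [Finset.prod, Finset.range]
      _ = X ^ t - 1 := by rw [this]; simp
  have hsplit : ∀ M : ℕ, ∏ j ∈ Finset.range (t * M), (X - C (ζ ^ j))
      = (X ^ t - 1 : k[X]) ^ M := by
    intro M
    induction M with
    | zero => simp
    | succ M ih =>
      have : t * (M + 1) = t * M + t := by ring
      rw [this, Finset.prod_range_add, ih]
      have h2 : ∀ j : ℕ, ζ ^ (t * M + j) = ζ ^ j := by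
        intro j
        rw [pow_add, pow_mul, h.pow_eq_one, one_pow, one_mul]
      have h3 : ∏ j ∈ Finset.range t, (X - C (ζ ^ (t * M + j))) = X ^ t - 1 := by
        rw [← base]
        exact Finset.prod_congr rfl fun j _ => by rw [h2 j]
      rw [h3, pow_succ]
  rcases hn with rfl | ⟨hc, m, rfl⟩
  · exact base
  · haveI : CharP k (ringChar k) := ringChar.charP k
    haveI : Fact (Nat.Prime (ringChar k)) := ⟨CharP.char_prime_of_ne_zero k hc⟩
    rw [hsplit (ringChar k ^ m)]
    have : ((X : k[X]) ^ t - 1) ^ ringChar k ^ m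
        = (X ^ t) ^ ringChar k ^ m - 1 ^ ringChar k ^ m := sub_pow_char_pow _ _ m
    rw [this, one_pow, ← pow_mul]

theorem stmt3_aux3 {K : Type*} [Field K] (φ : k →+* K) {n : ℕ} (hn : 0 < n)
    {ζ : k} (hq : ∏ j ∈ Finset.range n, (X - C (ζ ^ j)) = X ^ n - 1)
    (a b : K) : ∏ j ∈ Finset.range n, (a - φ (ζ ^ j) * b) = a ^ n - b ^ n := by
  have hqK : ∏ j ∈ Finset.range n, (X - C (φ (ζ ^ j))) = (X : K[X]) ^ n - 1 := by
    have := congrArg (Polynomial.map φ) hq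
    simpa [Polynomial.map_prod] using this
  rcases eq_or_ne b 0 with rfl | hb
  · simp [zero_pow hn.ne']
  · have key : ∀ j ∈ Finset.range n, a - φ (ζ ^ j) * b = b * (a * b⁻¹ - φ (ζ ^ j)) := by
      intro j _; field_simp
    rw [Finset.prod_congr rfl key, Finset.prod_mul_distrib, Finset.prod_const]
    have : ∏ j ∈ Finset.range n, (a * b⁻¹ - φ (ζ ^ j))
        = Polynomial.eval (a * b⁻¹) (∏ j ∈ Finset.range n, (X - C (φ (ζ ^ j)))) := by
      simp [Polynomial.eval_prod]
    rw [this, hqK]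
    rw [Polynomial.eval_sub, Polynomial.eval_pow, Polynomial.eval_X, Polynomial.eval_one,
      Finset.card_range, mul_sub, ← mul_pow, mul_one, show b * (a * b⁻¹) = a by field_simp]

theorem stmt3_aux4 {ζ : k} {n : ℕ} (hn : 0 < n)
    (hq : ∏ j ∈ Finset.range n, (X - C (ζ ^ j)) = X ^ n - 1)
    {R : Type*} [CommRing R] [Algebra k R] (x y : R) :
    ∏ j ∈ Finset.range n, (x - algebraMap k R (ζ ^ j) * y) = x ^ n - y ^ n := by
  classical
  set D := MvPolynomial (Fin 2) k
  set K := FractionRing D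
  have hinj : Function.Injective (algebraMap D K) := IsFractionRing.injective D K
  have hD : ∏ j ∈ Finset.range n,
      (MvPolynomial.X 0 - MvPolynomial.C (ζ ^ j) * MvPolynomial.X 1 : D)
      = (MvPolynomial.X 0 : D) ^ n - (MvPolynomial.X 1) ^ n := by
    apply hinj
    rw [map_prod, map_sub, map_pow, map_pow]
    have := stmt3_aux3 ((algebraMap D K).comp MvPolynomial.C) hn hq
      (algebraMap D K (MvPolynomial.X 0)) (algebraMap D K (MvPolynomial.X 1))
    simpa [map_sub, map_mul] using this
  have := congrArg (MvPolynomial.aeval (fun i : Fin 2 => if i = 0 then x else y) : D →ₐ[k] R) hD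
  simpa [map_prod, MvPolynomial.algebraMap_eq] using this

end stmt3aux

/-- Restricted identities: if `p(v,v)` is a primitive `t`-th root of unity and
`n = t`, or `n = t·lᵏ` where `l > 0` is the characteristic of the ground field,
then `[u, vⁿ]` equals the `n`-fold left-iterated skew commutator
`[...[[u,v],v]...,v]`, and `[vⁿ, u]` equals the `n`-fold right-iterated one. -/
theorem stmt_3 {k : Type*} [Field k] {A : Type*} [Ring A] [Algebra k A]
    {G : Type*} [CommMonoid G] (p : G →* G →* kˣ)
    (br : A → G → A → G → A)
    (hbr : ∀ (a : A) (da : G) (b : A) (db : G),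
      br a da b db = a * b - ((p da db : kˣ) : k) • (b * a))
    (u v : A) (du dv : G) (t : ℕ) (ht : 0 < t)
    (hroot : (p dv dv) ^ t = 1)
    (hprim : ∀ s : ℕ, 0 < s → s < t → (p dv dv) ^ s ≠ 1)
    (n : ℕ)
    (hn : n = t ∨ (ringChar k ≠ 0 ∧ ∃ m : ℕ, n = t * ringChar k ^ m))
    (L R : ℕ → A)
    (hL0 : L 0 = u) (hLs : ∀ m : ℕ, L (m + 1) = br (L m) (du * dv ^ m) v dv)
    (hR0 : R 0 = u) (hRs : ∀ m : ℕ, R (m + 1) = br v dv (R m) (dv ^ m * du)) :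
    br u du (v ^ n) (dv ^ n) = L n ∧ br (v ^ n) (dv ^ n) u du = R n := by
  classical
  set ζ : k := ((p dv dv : kˣ) : k) with hζdef
  set c : k := ((p du dv : kˣ) : k) with hcdef
  set d : k := ((p dv du : kˣ) : k) with hddef
  have hn0 : 0 < n := by
    rcases hn with rfl | ⟨hc, m, rfl⟩
    · exact ht
    · exact Nat.mul_pos ht (Nat.pow_pos (Nat.pos_of_ne_zero hc))
  -- ζ is a primitive t-th root of unity
  have hζt : ζ ^ t = 1 := by
    rw [hζdef, ← Units.val_pow_eq_pow_val, hroot, Units.val_one]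
  have hprimζ : IsPrimitiveRoot ζ t := by
    refine ⟨hζt, fun l hl => ?_⟩
    by_contra hnd
    have hr0 : 0 < l % t :=
      Nat.pos_of_ne_zero (fun h0 => hnd (Nat.dvd_of_mod_eq_zero h0))
    refine hprim (l % t) hr0 (Nat.mod_lt _ ht) ?_
    have hζr : ζ ^ (l % t) = 1 := by
      have h2 : ζ ^ (t * (l / t)) * ζ ^ (l % t) = ζ ^ l := by
        rw [← pow_add]
        congr 1
        exact Nat.div_add_mod l t
      rw [pow_mul, hζt, one_pow, one_mul] at h2
      rw [h2, hl]
    ext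
    rw [Units.val_pow_eq_pow_val, ← hζdef, hζr, Units.val_one]
  have hq := stmt3_aux2 ht hprimζ hn
  -- operators: right and left multiplication by v
  set f : Module.End k A := LinearMap.mulRight k v with hfdef
  set g : Module.End k A := LinearMap.mulLeft k v with hgdef
  have hgf : Commute g f := LinearMap.commute_mulLeft_right v v
  -- evaluation homomorphism from k[Y][X] sending inner Y to g, outer X to f
  set D2 := Polynomial (Polynomial k) with hD2def
  have hcommalg : ∀ a : k, Commute (algebraMap k (Module.End k A) a) g :=
    fun a => Algebra.commutes a g
  set Φi : Polynomial k →+* Module.End k A :=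
    Polynomial.eval₂RingHom' (algebraMap k (Module.End k A)) g hcommalg with hΦidef
  have hΦiC : ∀ a : k, Φi (Polynomial.C a) = algebraMap k (Module.End k A) a := by
    intro a
    rw [hΦidef, Polynomial.eval₂RingHom'_apply, Polynomial.eval₂_C]
  have hΦiX : Φi Polynomial.X = g := by
    rw [hΦidef, Polynomial.eval₂RingHom'_apply, Polynomial.eval₂_X]
  have hΦi : ∀ q : Polynomial k, Commute (Φi q) f := by
    intro q
    induction q using Polynomial.induction_on with
    | C a =>
      rw [hΦiC]
      exact Algebra.commutes a f
    | add q r hq hr =>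
      rw [map_add]
      exact hq.add_left hr
    | monomial m a ih =>
      rw [map_mul, map_pow, hΦiC, hΦiX]
      exact Commute.mul_left (Algebra.commutes a f) (hgf.pow_left (m + 1))
  set Φ : D2 →+* Module.End k A := Polynomial.eval₂RingHom' Φi f hΦi with hΦdef
  have hΦX : Φ Polynomial.X = f := by
    rw [hΦdef, Polynomial.eval₂RingHom'_apply, Polynomial.eval₂_X]
  have hΦY : Φ (Polynomial.C Polynomial.X) = g := by
    rw [hΦdef, Polynomial.eval₂RingHom'_apply, Polynomial.eval₂_C, hΦiX]
  have hΦalg : ∀ a : k, Φ (algebraMap k D2 a) = algebraMap k (Module.End k A) a := by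
    intro a
    have h2 : algebraMap k D2 a = Polynomial.C (Polynomial.C a) := rfl
    rw [h2, hΦdef, Polynomial.eval₂RingHom'_apply, Polynomial.eval₂_C, hΦiC]
  -- the linear factors
  set qL : ℕ → D2 := fun j =>
    Polynomial.X - algebraMap k D2 (c * ζ ^ j) * Polynomial.C Polynomial.X with hqLdef
  set qR : ℕ → D2 := fun j =>
    Polynomial.C Polynomial.X - algebraMap k D2 (d * ζ ^ j) * Polynomial.X with hqRdef
  have hΦqL : ∀ j, Φ (qL j) = f - (c * ζ ^ j) • g := by
    intro j
    rw [hqLdef]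
    simp only
    rw [map_sub, map_mul, hΦX, hΦY, hΦalg, ← Algebra.smul_def]
  have hΦqR : ∀ j, Φ (qR j) = g - (d * ζ ^ j) • f := by
    intro j
    rw [hqRdef]
    simp only
    rw [map_sub, map_mul, hΦX, hΦY, hΦalg, ← Algebra.smul_def]
  -- identification of the iterated brackets
  have hLm : ∀ m : ℕ, L m = Φ (∏ j ∈ Finset.range m, qL j) u := by
    intro m
    induction m with
    | zero =>
      rw [hL0, Finset.range_zero, Finset.prod_empty, map_one, Module.End.one_apply]
    | succ m ih =>
      have hcoef : ((p (du * dv ^ m) dv : kˣ) : k) = c * ζ ^ m := by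
        have h1 : p (du * dv ^ m) dv = p du dv * (p dv dv) ^ m := by
          rw [map_mul, map_pow]
          rfl
        rw [h1, Units.val_mul, Units.val_pow_eq_pow_val]
      have hstep : ∏ j ∈ Finset.range (m + 1), qL j
          = qL m * ∏ j ∈ Finset.range m, qL j := by
        rw [Finset.prod_range_succ, mul_comm]
      rw [hLs m, hbr, hcoef, hstep, map_mul, Module.End.mul_apply, ← ih, hΦqL,
        LinearMap.sub_apply, LinearMap.smul_apply, hfdef, hgdef,
        LinearMap.mulRight_apply, LinearMap.mulLeft_apply]
  have hRm : ∀ m : ℕ, R m = Φ (∏ j ∈ Finset.range m, qR j) u := by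
    intro m
    induction m with
    | zero =>
      rw [hR0, Finset.range_zero, Finset.prod_empty, map_one, Module.End.one_apply]
    | succ m ih =>
      have hcoef : ((p dv (dv ^ m * du) : kˣ) : k) = d * ζ ^ m := by
        have h1 : p dv (dv ^ m * du) = (p dv dv) ^ m * p dv du := by
          rw [map_mul, map_pow]
        rw [h1, Units.val_mul, Units.val_pow_eq_pow_val, mul_comm]
      have hstep : ∏ j ∈ Finset.range (m + 1), qR j
          = qR m * ∏ j ∈ Finset.range m, qR j := by
        rw [Finset.prod_range_succ, mul_comm]
      rw [hRs m, hbr, hcoef, hstep, map_mul, Module.End.mul_apply, ← ih, hΦqR,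
        LinearMap.sub_apply, LinearMap.smul_apply, hfdef, hgdef,
        LinearMap.mulRight_apply, LinearMap.mulLeft_apply]
  -- collapse the products using the polynomial identity
  have keyL : ∏ j ∈ Finset.range n, qL j
      = Polynomial.X ^ n - algebraMap k D2 c ^ n * (Polynomial.C Polynomial.X) ^ n := by
    have key := stmt3_aux4 hn0 hq (Polynomial.X : D2)
      (algebraMap k D2 c * Polynomial.C Polynomial.X)
    have hcong : ∀ j ∈ Finset.range n, qL j = Polynomial.X
        - algebraMap k D2 (ζ ^ j) * (algebraMap k D2 c * Polynomial.C Polynomial.X) := by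
      intro j _
      rw [hqLdef]
      simp only
      rw [map_mul]
      ring
    rw [Finset.prod_congr rfl hcong, key, mul_pow]
  have keyR : ∏ j ∈ Finset.range n, qR j
      = (Polynomial.C Polynomial.X) ^ n - algebraMap k D2 d ^ n * Polynomial.X ^ n := by
    have key := stmt3_aux4 hn0 hq (Polynomial.C Polynomial.X : D2)
      (algebraMap k D2 d * Polynomial.X)
    have hcong : ∀ j ∈ Finset.range n, qR j = Polynomial.C Polynomial.X
        - algebraMap k D2 (ζ ^ j) * (algebraMap k D2 d * Polynomial.X) := by
      intro j _
      rw [hqRdef]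
      simp only
      rw [map_mul]
      ring
    rw [Finset.prod_congr rfl hcong, key, mul_pow]
  -- powers of f and g
  have hfn : (f ^ n : Module.End k A) u = u * v ^ n := by
    rw [hfdef, LinearMap.pow_mulRight, LinearMap.mulRight_apply]
  have hgn : (g ^ n : Module.End k A) u = v ^ n * u := by
    rw [hgdef, LinearMap.pow_mulLeft, LinearMap.mulLeft_apply]
  constructor
  · have hcn : ((p du (dv ^ n) : kˣ) : k) = c ^ n := by
      rw [map_pow, Units.val_pow_eq_pow_val]
    rw [hbr, hcn, hLm n, keyL]
    simp only [map_sub, map_mul, map_pow, hΦX, hΦY, hΦalg]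
    rw [← map_pow, ← Algebra.smul_def, LinearMap.sub_apply, LinearMap.smul_apply, hfn, hgn]
  · have hdn : ((p (dv ^ n) du : kˣ) : k) = d ^ n := by
      have h1 : p (dv ^ n) du = (p dv du) ^ n := by
        rw [map_pow]
        rfl
      rw [h1, Units.val_pow_eq_pow_val]
    rw [hbr, hdn, hRm n, keyR]
    simp only [map_sub, map_mul, map_pow, hΦX, hΦY, hΦalg]
    rw [← map_pow, ← Algebra.smul_def, LinearMap.sub_apply, LinearMap.smul_apply, hfn, hgn]
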